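/- arXiv:1103.3571 — 2 statements merged into one kernel-verified Lean document; each statement's English description precedes it below -/
import Mathlib

section
/- For all $t > 0$, $\sum_{k=1}^{\infty} e^{-\pi^2(k - 1/2)^2 t} = \frac{1}{\sqrt{\pi t}}\left(\frac{1}{2} + 2\sum_{k=1}^{\infty} e^{-4k^2/t} - \sum_{k=1}^{\infty} e^{-k^2/t}\right)$. -/
open Real Complex

lemma aux_summable {c : ℝ} (hc : 0 < c) (a : ℝ) (ha : 0 ≤ a) :
    Summable fun n : ℕ ↦ Real.exp (-c * ((n : ℝ) + a) ^ 2) := by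
  have hlt : Real.exp (-c) < 1 := Real.exp_lt_one_iff.mpr (neg_lt_zero.mpr hc)
  refine Summable.of_nonneg_of_le (fun n ↦ (Real.exp_pos _).le) (fun n ↦ ?_)
    (((summable_geometric_of_lt_one (Real.exp_pos _).le hlt).mul_left
      (Real.exp (-c * a ^ 2))))
  rw [← Real.exp_nat_mul, ← Real.exp_add]
  apply Real.exp_le_exp.2
  have h1 : (n : ℝ) ≤ (n : ℝ) ^ 2 := by
    rcases Nat.eq_zero_or_pos n with h | h
    · simp [h]
    · nlinarith [(Nat.one_le_cast.2 h : (1:ℝ) ≤ n)]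
  nlinarith [mul_nonneg (Nat.cast_nonneg n : (0:ℝ) ≤ n) ha]

lemma key (t : ℝ) (ht : 0 < t) :
    ∑' n : ℤ, (((-1 : ℝ) ^ n * Real.exp (-(n : ℝ) ^ 2 / t) : ℝ) : ℂ) =
      (Real.sqrt (Real.pi * t) : ℂ) *
        ∑' n : ℤ, ((Real.exp (-(Real.pi ^ 2) * ((n : ℝ) + 1 / 2) ^ 2 * t) : ℝ) : ℂ) := by
  have hπt : 0 < Real.pi * t := mul_pos Real.pi_pos ht
  have ha : 0 < (((Real.pi * t)⁻¹ : ℝ) : ℂ).re := by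
    rw [Complex.ofReal_re]; positivity
  have H := Complex.tsum_exp_neg_quadratic ha (-Complex.I / 2)
  have e1 : ∀ n : ℤ, Complex.exp (-(Real.pi : ℂ) * (((Real.pi * t)⁻¹ : ℝ) : ℂ) * (n : ℂ) ^ 2
      + 2 * (Real.pi : ℂ) * (-Complex.I / 2) * (n : ℂ)) =
      (((-1 : ℝ) ^ n * Real.exp (-(n : ℝ) ^ 2 / t) : ℝ) : ℂ) := by
    intro n
    have hπ : (Real.pi : ℂ) ≠ 0 := Complex.ofReal_ne_zero.mpr Real.pi_ne_zero
    have ht' : (t : ℂ) ≠ 0 := Complex.ofReal_ne_zero.mpr ht.ne'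
    have : -(Real.pi : ℂ) * (((Real.pi * t)⁻¹ : ℝ) : ℂ) * (n : ℂ) ^ 2
        + 2 * (Real.pi : ℂ) * (-Complex.I / 2) * (n : ℂ)
        = ((-(n : ℝ) ^ 2 / t : ℝ) : ℂ) + (n : ℤ) * (-(Real.pi : ℂ) * Complex.I) := by
      push_cast
      field_simp
    rw [this, Complex.exp_add, Complex.exp_int_mul]
    have : Complex.exp (-(Real.pi : ℂ) * Complex.I) = -1 := by
      rw [neg_mul, Complex.exp_neg, Complex.exp_pi_mul_I]
      norm_num
    rw [this]
    push_cast [Complex.ofReal_exp]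
    ring
  have e2 : ∀ n : ℤ, Complex.exp (-(Real.pi : ℂ) / (((Real.pi * t)⁻¹ : ℝ) : ℂ)
      * ((n : ℂ) + Complex.I * (-Complex.I / 2)) ^ 2) =
      ((Real.exp (-(Real.pi ^ 2) * ((n : ℝ) + 1 / 2) ^ 2 * t) : ℝ) : ℂ) := by
    intro n
    have hne : (((Real.pi * t)⁻¹ : ℝ) : ℂ) ≠ 0 :=
      Complex.ofReal_ne_zero.mpr (by positivity)
    have hI : Complex.I * (-Complex.I / 2) = 1 / 2 := by
      rw [← mul_div_assoc, mul_neg, Complex.I_mul_I]; norm_num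
    have harg : -(Real.pi : ℂ) / (((Real.pi * t)⁻¹ : ℝ) : ℂ)
        * ((n : ℂ) + Complex.I * (-Complex.I / 2)) ^ 2
        = ((-(Real.pi ^ 2) * ((n : ℝ) + 1 / 2) ^ 2 * t : ℝ) : ℂ) := by
      rw [hI]
      push_cast
      field_simp
    rw [harg, Complex.ofReal_exp]
  have hs : Real.sqrt (Real.pi * t) ≠ 0 := (Real.sqrt_pos.mpr hπt).ne'
  have e3 : 1 / (((((Real.pi * t)⁻¹ : ℝ)) : ℂ) ^ (1 / 2 : ℂ)) = (Real.sqrt (Real.pi * t) : ℂ) := by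
    rw [show ((1 : ℂ)/2) = ((1/2 : ℝ) : ℂ) by norm_num,
      ← Complex.ofReal_cpow (by positivity), ← Real.sqrt_eq_rpow, Real.sqrt_inv]
    rw [show ((((Real.sqrt (Real.pi * t))⁻¹ : ℝ)) : ℂ) = ((Real.sqrt (Real.pi * t) : ℂ))⁻¹ by
      push_cast; ring]
    rw [one_div, inv_inv]
  simp only [e1, e2] at H
  rw [H, e3]


/-- Poisson summation identity
∑_{k≥1} e^{-π²(k-1/2)²t} = (πt)^{-1/2} (1/2 + 2∑_{k≥1} e^{-4k²/t} - ∑_{k≥1} e^{-k²/t}). -/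
theorem poisson_half_shift (t : ℝ) (ht : 0 < t) :
    ∑' k : ℕ+, Real.exp (-(Real.pi ^ 2) * ((k : ℝ) - 1 / 2) ^ 2 * t) =
      (1 / Real.sqrt (Real.pi * t)) *
        (1 / 2 + 2 * ∑' k : ℕ+, Real.exp (-(4 * (k : ℝ) ^ 2) / t)
          - ∑' k : ℕ+, Real.exp (-((k : ℝ) ^ 2) / t)) := by
  have hπt : 0 < Real.pi * t := mul_pos Real.pi_pos ht
  have hs : Real.sqrt (Real.pi * t) ≠ 0 := (Real.sqrt_pos.mpr hπt).ne'
  set L := ∑' k : ℕ+, Real.exp (-(Real.pi ^ 2) * ((k : ℝ) - 1 / 2) ^ 2 * t) with hLdef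
  set A := ∑' k : ℕ+, Real.exp (-(4 * (k : ℝ) ^ 2) / t) with hAdef
  set B := ∑' k : ℕ+, Real.exp (-((k : ℝ) ^ 2) / t) with hBdef
  -- summability of the ℕ-indexed Gaussian with shift 1/2
  have sL : Summable fun n : ℕ ↦ Real.exp (-(Real.pi ^ 2) * ((n : ℝ) + 1 / 2) ^ 2 * t) := by
    refine ((aux_summable (mul_pos (pow_pos Real.pi_pos 2) ht) (1/2) (by norm_num)).congr
      fun n ↦ ?_)
    ring_nf
  have sB : Summable fun n : ℕ ↦ Real.exp (-(((n : ℝ) + 1) ^ 2) / t) := by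
    refine ((aux_summable (c := 1/t) (by positivity) 1 (by norm_num)).congr fun n ↦ ?_)
    congr 1; field_simp
  have sT : Summable fun n : ℕ ↦ (-1 : ℝ) ^ (n + 1) * Real.exp (-(((n : ℝ) + 1) ^ 2) / t) := by
    refine Summable.of_abs (sB.congr fun n ↦ ?_)
    simp [abs_mul, abs_of_pos (Real.exp_pos _)]
  have sA : Summable fun n : ℕ ↦ Real.exp (-(4 * ((n : ℝ) + 1) ^ 2) / t) := by
    refine ((aux_summable (c := 4/t) (by positivity) 1 (by norm_num)).congr fun n ↦ ?_)
    congr 1; field_simp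
  -- Step 1 : P = 2 L
  have hLnat : L = ∑' n : ℕ, Real.exp (-(Real.pi ^ 2) * ((n : ℝ) + 1 / 2) ^ 2 * t) := by
    rw [hLdef, ← Equiv.pnatEquivNat.symm.tsum_eq]
    refine tsum_congr fun n ↦ ?_
    have h : ((Equiv.pnatEquivNat.symm n : ℕ+) : ℝ) = (n : ℝ) + 1 := by
      simp [Equiv.pnatEquivNat, Nat.succPNat]
    rw [h]
    ring_nf
  have hP : ∑' n : ℤ, Real.exp (-(Real.pi ^ 2) * ((n : ℝ) + 1 / 2) ^ 2 * t) = 2 * L := by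
    rw [tsum_of_nat_of_neg_add_one (by exact_mod_cast sL)
      (by refine sL.congr fun n ↦ ?_; push_cast; ring_nf)]
    have h2 : (fun n : ℕ ↦ Real.exp (-(Real.pi ^ 2) * (((-(n+1) : ℤ) : ℝ) + 1 / 2) ^ 2 * t))
        = fun n : ℕ ↦ Real.exp (-(Real.pi ^ 2) * ((n : ℝ) + 1 / 2) ^ 2 * t) := by
      funext n; push_cast; ring_nf
    rw [h2, hLnat]
    push_cast
    ring
  -- Step 2 : S = sqrt(π t) * P
  have hS : ∑' n : ℤ, ((-1 : ℝ) ^ n * Real.exp (-(n : ℝ) ^ 2 / t))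
      = Real.sqrt (Real.pi * t) * (2 * L) := by
    have := key t ht
    rw [← Complex.ofReal_tsum, ← Complex.ofReal_tsum, ← Complex.ofReal_mul] at this
    have := Complex.ofReal_inj.mp this
    rw [this, hP]
  -- Step 3 : S = 1 + 2T
  set T := ∑' n : ℕ, (-1 : ℝ) ^ (n + 1) * Real.exp (-(((n : ℝ) + 1) ^ 2) / t) with hTdef
  have s0 : Summable fun n : ℕ ↦ Real.exp (-((n : ℝ) ^ 2) / t) := by
    refine ((aux_summable (c := 1/t) (by positivity) 0 le_rfl).congr fun n ↦ ?_)
    rw [add_zero]; congr 1; field_simp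
  have snat0 : Summable fun n : ℕ ↦ (-1 : ℝ) ^ n * Real.exp (-((n : ℝ) ^ 2) / t) := by
    refine Summable.of_abs (s0.congr fun n ↦ ?_)
    simp [abs_mul, abs_of_pos (Real.exp_pos _)]
  have c1 : ∀ n : ℕ, ((-1 : ℝ) ^ ((n : ℤ)) * Real.exp (-(((n : ℤ) : ℝ)) ^ 2 / t))
      = (-1 : ℝ) ^ n * Real.exp (-((n : ℝ) ^ 2) / t) := by
    intro n; rw [zpow_natCast]; norm_num
  have c2 : ∀ n : ℕ, ((-1 : ℝ) ^ ((-((n : ℤ) + 1))) * Real.exp (-((((-((n : ℤ) + 1)) : ℤ) : ℝ)) ^ 2 / t))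
      = (-1 : ℝ) ^ (n + 1) * Real.exp (-(((n : ℝ) + 1) ^ 2) / t) := by
    intro n
    have h1 : ((-1 : ℝ)) ^ ((-((n : ℤ) + 1))) = (-1 : ℝ) ^ (n + 1) := by
      rw [zpow_neg, show ((n : ℤ) + 1) = ((n + 1 : ℕ) : ℤ) by push_cast; ring, zpow_natCast,
        ← inv_pow, inv_neg, inv_one]
    rw [h1]
    congr 2
    push_cast
    ring
  have hSplit : ∑' n : ℤ, ((-1 : ℝ) ^ n * Real.exp (-(n : ℝ) ^ 2 / t)) = (1 + T) + T := by
    rw [tsum_of_nat_of_neg_add_one (snat0.congr fun n ↦ (c1 n).symm)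
      (sT.congr fun n ↦ (c2 n).symm), tsum_congr c1, tsum_congr c2,
      Summable.tsum_eq_zero_add snat0]
    have : (fun n : ℕ ↦ (-1 : ℝ) ^ (n + 1) * Real.exp (-(((n + 1 : ℕ) : ℝ) ^ 2) / t))
        = fun n : ℕ ↦ (-1 : ℝ) ^ (n + 1) * Real.exp (-(((n : ℝ) + 1) ^ 2) / t) := by
      funext n; push_cast; ring_nf
    rw [this]
    norm_num
    rfl
  -- ℕ+ sums as ℕ sums
  have hA' : A = ∑' n : ℕ, Real.exp (-(4 * ((n : ℝ) + 1) ^ 2) / t) := by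
    rw [hAdef, ← Equiv.pnatEquivNat.symm.tsum_eq]
    refine tsum_congr fun n ↦ ?_
    have h : ((Equiv.pnatEquivNat.symm n : ℕ+) : ℝ) = (n : ℝ) + 1 := by
      simp [Equiv.pnatEquivNat, Nat.succPNat]
    rw [h]
  have hB' : B = ∑' n : ℕ, Real.exp (-(((n : ℝ) + 1) ^ 2) / t) := by
    rw [hBdef, ← Equiv.pnatEquivNat.symm.tsum_eq]
    refine tsum_congr fun n ↦ ?_
    have h : ((Equiv.pnatEquivNat.symm n : ℕ+) : ℝ) = (n : ℝ) + 1 := by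
      simp [Equiv.pnatEquivNat, Nat.succPNat]
    rw [h]
  -- Step 4 : B + T = 2A
  have hBT : B + T = 2 * A := by
    rw [hB', hTdef, ← Summable.tsum_add sB sT]
    have hinj : Function.Injective (fun n : ℕ ↦ 2 * n + 1) := by
      intro a b hab
      simp only at hab
      omega
    have hsupp : Function.support
        (fun m : ℕ ↦ Real.exp (-(((m : ℝ) + 1) ^ 2) / t)
          + (-1 : ℝ) ^ (m + 1) * Real.exp (-(((m : ℝ) + 1) ^ 2) / t))
        ⊆ Set.range (fun n : ℕ ↦ 2 * n + 1) := by
      intro m hm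
      rcases Nat.even_or_odd m with he | ho
      · exfalso
        apply hm
        have hneg : (-1 : ℝ) ^ (m + 1) = -1 := Odd.neg_one_pow he.add_one
        show Real.exp (-(((m : ℝ) + 1) ^ 2) / t)
          + (-1 : ℝ) ^ (m + 1) * Real.exp (-(((m : ℝ) + 1) ^ 2) / t) = 0
        rw [hneg]
        ring
      · obtain ⟨k, hk⟩ := ho
        exact ⟨k, by dsimp only; omega⟩
    rw [← hinj.tsum_eq hsupp]
    have : (fun n : ℕ ↦ Real.exp (-((((2 * n + 1 : ℕ) : ℝ) + 1) ^ 2) / t)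
        + (-1 : ℝ) ^ ((2 * n + 1) + 1) * Real.exp (-((((2 * n + 1 : ℕ) : ℝ) + 1) ^ 2) / t))
        = fun n : ℕ ↦ 2 * Real.exp (-(4 * ((n : ℝ) + 1) ^ 2) / t) := by
      funext n
      have hpow : (-1 : ℝ) ^ ((2 * n + 1) + 1) = 1 := by
        rw [pow_succ, pow_succ]
        simp [pow_mul]
      rw [hpow]
      have : (-((((2 * n + 1 : ℕ) : ℝ) + 1) ^ 2) / t) = (-(4 * ((n : ℝ) + 1) ^ 2) / t) := by
        push_cast; ring
      rw [this]
      ring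
    rw [this, tsum_mul_left, hA']
  -- Conclusion
  rw [hSplit] at hS
  rw [one_div, inv_mul_eq_div, eq_div_iff hs]
  linear_combination (-1/2 : ℝ) * hS + hBT
end

section
/- Let $H$ be a finite-dimensional complex inner product space, $A$ an invertible self-adjoint operator on $H$, and $\gamma$ a unitary with $\gamma^2 = -\mathrm{Id}$, $\gamma A = -A\gamma$. Let $\Pi_>$ be the orthogonal projection onto the span of the positive eigenspaces of $A$. Then the image of $\Pi_>$ is a Lagrangian subspace of the symplectic vector space $(H, \omega)$ where $\omega(x, y) = \langle x, \gamma y\rangle$: that is, $\gamma(\mathrm{Im}\,\Pi_>) = (\mathrm{Im}\,\Pi_>)^{\perp}$. -/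
/-- For an invertible self-adjoint A on a finite-dimensional complex inner product
space and a unitary γ with γ² = -Id anticommuting with A, the span L of the positive eigenspaces
of A satisfies γ(L) = L^⊥, i.e. L is Lagrangian for the symplectic form ⟨·, γ·⟩. -/
theorem positive_spectral_subspace_lagrangian
    {H : Type*} [NormedAddCommGroup H] [InnerProductSpace ℂ H] [FiniteDimensional ℂ H]
    (A γ : H →ₗ[ℂ] H)
    (hA : ∀ x y : H, (inner ℂ (A x) y : ℂ) = inner ℂ x (A y))
    (hAinv : Function.Bijective A)
    (hγ : ∀ x y : H, (inner ℂ (γ x) (γ y) : ℂ) = inner ℂ x y)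
    (hsq : ∀ v, γ (γ v) = -v)
    (hanti : ∀ v, γ (A v) = -A (γ v)) :
    Submodule.map γ (⨆ (μ : ℝ) (_ : 0 < μ), Module.End.eigenspace A (μ : ℂ))
      = (⨆ (μ : ℝ) (_ : 0 < μ), Module.End.eigenspace A (μ : ℂ))ᗮ := by
  have hsymm : A.IsSymmetric := hA
  set L : Submodule ℂ H := ⨆ (μ : ℝ) (_ : 0 < μ), Module.End.eigenspace A (μ : ℂ) with hL
  set N : Submodule ℂ H := ⨆ (μ : ℝ) (_ : μ < 0), Module.End.eigenspace A (μ : ℂ) with hN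
  -- γ maps eigenspace μ into eigenspace (-μ)
  have hmap : ∀ (μ : ℂ) (v : H), v ∈ Module.End.eigenspace A μ →
      γ v ∈ Module.End.eigenspace A (-μ) := by
    intro μ v hv
    rw [Module.End.mem_eigenspace_iff] at hv ⊢
    have h := hanti v
    rw [hv, map_smul] at h
    rw [neg_smul]
    exact neg_eq_iff_eq_neg.mp h.symm
  -- γ L ≤ N
  have hγLN : Submodule.map γ L ≤ N := by
    rw [hL, Submodule.map_iSup]
    refine iSup_le fun μ => ?_
    rw [Submodule.map_iSup]
    refine iSup_le fun hμ => ?_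
    refine le_trans ?_ (le_iSup_of_le (-μ) (le_iSup_of_le (by linarith) le_rfl))
    rintro x ⟨v, hv, rfl⟩
    have := hmap (μ : ℂ) v hv
    simpa using this
  -- γ N ≤ L
  have hγNL : Submodule.map γ N ≤ L := by
    rw [hN, Submodule.map_iSup]
    refine iSup_le fun μ => ?_
    rw [Submodule.map_iSup]
    refine iSup_le fun hμ => ?_
    refine le_trans ?_ (le_iSup_of_le (-μ) (le_iSup_of_le (by linarith) le_rfl))
    rintro x ⟨v, hv, rfl⟩
    have := hmap (μ : ℂ) v hv
    simpa using this
  -- N ≤ Lᗮ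
  have hNL : N ≤ Lᗮ := by
    change N ⟂ L
    rw [hN, hL, Submodule.isOrtho_iSup_left]
    refine fun μ => ?_
    rw [Submodule.isOrtho_iSup_left]
    refine fun hμ => ?_
    rw [Submodule.isOrtho_iSup_right]
    refine fun ν => ?_
    rw [Submodule.isOrtho_iSup_right]
    refine fun hν => ?_
    rw [Submodule.isOrtho_iff_inner_eq]
    intro u hu v hv
    have hne : (μ : ℂ) ≠ (ν : ℂ) := by
      simp only [ne_eq, Complex.ofReal_inj]; linarith
    exact hsymm.orthogonalFamily_eigenspaces hne ⟨u, hu⟩ ⟨v, hv⟩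
  -- eigenspace 0 = ⊥
  have h0 : Module.End.eigenspace A (0 : ℂ) = ⊥ := by
    rw [Module.End.eigenspace_zero]
    exact LinearMap.ker_eq_bot.mpr hAinv.injective
  -- L ⊔ N = ⊤
  have htop : L ⊔ N = ⊤ := by
    rw [eq_top_iff]
    have hspec : (⨆ μ : ℂ, Module.End.eigenspace A μ) = ⊤ := by
      have := hsymm.orthogonalComplement_iSup_eigenspaces_eq_bot
      rwa [Submodule.orthogonal_eq_bot_iff] at this
    rw [← hspec]
    refine iSup_le fun μ => ?_
    by_cases hbot : Module.End.eigenspace A μ = ⊥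
    · simp [hbot]
    · have hreal : (starRingEnd ℂ) μ = μ := by
        apply hsymm.conj_eigenvalue_eq_self
        exact Module.End.hasEigenvalue_iff.mpr hbot
      have : μ = ((μ.re : ℝ) : ℂ) := Complex.conj_eq_iff_re.mp hreal |>.symm
      rcases lt_trichotomy (0 : ℝ) μ.re with hpos | hzero | hneg
      · refine le_trans ?_ le_sup_left
        rw [hL, this]
        exact le_iSup_of_le μ.re (le_iSup_of_le hpos le_rfl)
      · rw [this, ← hzero] at hbot ⊢
        simp [Complex.ofReal_zero, h0] at hbot
      · refine le_trans ?_ le_sup_right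
        rw [hN, this]
        exact le_iSup_of_le μ.re (le_iSup_of_le hneg le_rfl)
  -- N = Lᗮ by dimension
  have hNeq : N = Lᗮ := by
    apply Submodule.eq_of_le_of_finrank_le hNL
    have h1 : Module.finrank ℂ L + Module.finrank ℂ Lᗮ = Module.finrank ℂ H :=
      Submodule.finrank_add_finrank_orthogonal L
    have h2 : Module.finrank ℂ (L ⊔ N : Submodule ℂ H) + Module.finrank ℂ (L ⊓ N : Submodule ℂ H)
        = Module.finrank ℂ L + Module.finrank ℂ N :=
      Submodule.finrank_sup_add_finrank_inf_eq L N
    have h3 : L ⊓ N = ⊥ := by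
      rw [eq_bot_iff]
      refine le_trans (inf_le_inf_left L hNL) ?_
      rw [Submodule.inf_orthogonal_eq_bot]
    rw [htop, h3, finrank_top, finrank_bot, add_zero] at h2
    omega
  rw [← hNeq]
  -- γ L = N : ≤ done, ≥ : w ∈ N ⇒ w = -γ (γ w), γ w ∈ L
  refine le_antisymm hγLN fun w hw => ?_
  have hγw : γ w ∈ L := hγNL ⟨w, hw, rfl⟩
  have : γ (γ w) = -w := hsq w
  refine ⟨-(γ w), Submodule.neg_mem L hγw, ?_⟩
  rw [map_neg, this, neg_neg]
end
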